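/- Let β > 0, let v_1,…,v_N > 0 and ρ_1,…,ρ_N ∈ [0,1] with at least one ρ_i in the open interval (0,1), and define f(η) = Σ_{i=1}^{N} v_i h(ρ_i,β,η) − Σ_{i=1}^{N} v_i ρ_i. Then f is continuous on [0,1] and there exists η* ∈ (0,1) such that f(η*) = 0; that is, there is a threshold value that exactly preserves the total material volume under the Heaviside projection. -/

import Mathlib

/-- The tanh-based Heaviside projection. -/
noncomputable def heavisideProj (ρ β η : ℝ) : ℝ :=
  (Real.tanh (β * η) + Real.tanh (β * (ρ - η))) /
    (Real.tanh (β * η) + Real.tanh (β * (1 - η)))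

open Real Set

lemma continuous_tanh' : Continuous Real.tanh := by
  have : Real.tanh = fun x => Real.sinh x / Real.cosh x := funext fun x => Real.tanh_eq_sinh_div_cosh x
  rw [this]
  exact Real.continuous_sinh.div Real.continuous_cosh fun x => (Real.cosh_pos x).ne'

lemma tanh_pos' {x : ℝ} (hx : 0 < x) : 0 < Real.tanh x := by
  rw [Real.tanh_eq_sinh_div_cosh]
  exact div_pos (Real.sinh_pos_iff.mpr hx) (Real.cosh_pos x)

lemma tanh_nonneg' {x : ℝ} (hx : 0 ≤ x) : 0 ≤ Real.tanh x := by
  rcases hx.lt_or_eq with h | h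
  · exact (tanh_pos' h).le
  · simp [← h]

lemma hasDerivAt_tanh' (x : ℝ) : HasDerivAt Real.tanh ((Real.cosh x ^ 2)⁻¹) x := by
  have h : HasDerivAt (fun x => Real.sinh x / Real.cosh x) _ x := (Real.hasDerivAt_sinh x).div (Real.hasDerivAt_cosh x) (Real.cosh_pos x).ne'
  have : Real.tanh = fun x => Real.sinh x / Real.cosh x := funext fun x => Real.tanh_eq_sinh_div_cosh x
  rw [this]
  convert h using 1
  have hc := Real.cosh_sq_sub_sinh_sq x
  field_simp
  nlinarith [Real.cosh_pos x]

lemma deriv_tanh' : deriv Real.tanh = fun x => (Real.cosh x ^ 2)⁻¹ :=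
  funext fun x => (hasDerivAt_tanh' x).deriv

lemma strictConcave_tanh : StrictConcaveOn ℝ (Set.Ici (0:ℝ)) Real.tanh := by
  apply strictConcaveOn_of_deriv2_neg (convex_Ici 0) continuous_tanh'.continuousOn
  intro x hx
  rw [interior_Ici, mem_Ioi] at hx
  have h2 : HasDerivAt (fun x => (Real.cosh x ^ 2)⁻¹)
      (-(2 * Real.cosh x ^ 1 * Real.sinh x) / (Real.cosh x ^ 2) ^ 2) x :=
    ((Real.hasDerivAt_cosh x).pow 2).inv (pow_pos (Real.cosh_pos x) 2).ne'
  have : deriv^[2] Real.tanh x = -(2 * Real.cosh x ^ 1 * Real.sinh x) / (Real.cosh x ^ 2) ^ 2 := by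
    rw [Function.iterate_succ, Function.iterate_one, Function.comp_apply, deriv_tanh', h2.deriv]
  rw [this]
  have hs : 0 < Real.sinh x := Real.sinh_pos_iff.mpr hx
  have hc := Real.cosh_pos x
  apply div_neg_of_neg_of_pos
  · nlinarith
  · positivity

lemma tanh_mul_ge {x r : ℝ} (hx : 0 < x) (hr : r ∈ Set.Icc (0:ℝ) 1) :
    r * Real.tanh x ≤ Real.tanh (r * x) := by
  have h := strictConcave_tanh.concaveOn.2 (Set.mem_Ici.mpr (le_refl (0:ℝ)))
    (Set.mem_Ici.mpr hx.le) (show (0:ℝ) ≤ 1 - r by linarith [hr.2]) hr.1 (by ring)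
  simpa [smul_eq_mul] using h

lemma tanh_mul_gt {x r : ℝ} (hx : 0 < x) (hr : r ∈ Set.Ioo (0:ℝ) 1) :
    r * Real.tanh x < Real.tanh (r * x) := by
  have h := strictConcave_tanh.2 (Set.mem_Ici.mpr (le_refl (0:ℝ)))
    (Set.mem_Ici.mpr hx.le) (ne_of_lt hx)
    (show (0:ℝ) < 1 - r by linarith [hr.2]) hr.1 (by ring)
  simpa [smul_eq_mul] using h

lemma heaviside_zero (r β : ℝ) : heavisideProj r β 0 = Real.tanh (β * r) / Real.tanh β := by
  simp [heavisideProj]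

lemma heaviside_one (r β : ℝ) :
    heavisideProj r β 1 = (Real.tanh β - Real.tanh (β * (1 - r))) / Real.tanh β := by
  have h : β * (r - 1) = -(β * (1 - r)) := by ring
  rw [heavisideProj, h, Real.tanh_neg]
  norm_num [sub_eq_add_neg]

theorem volume_preserving_threshold_exists (N : ℕ) (β : ℝ) (hβ : 0 < β)
    (v ρ : Fin N → ℝ) (hv : ∀ i, 0 < v i) (hρ : ∀ i, ρ i ∈ Set.Icc (0:ℝ) 1)
    (f : ℝ → ℝ)
    (hf : ∀ η, f η = (∑ i, v i * heavisideProj (ρ i) β η) - ∑ i, v i * ρ i)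
    (hmid : ∃ i, ρ i ∈ Set.Ioo (0:ℝ) 1) :
    ContinuousOn f (Set.Icc (0:ℝ) 1) ∧ ∃ η' ∈ Set.Ioo (0:ℝ) 1, f η' = 0 := by
  have hT : 0 < Real.tanh β := tanh_pos' hβ
  -- continuity
  have hcont : ContinuousOn f (Set.Icc (0:ℝ) 1) := by
    have hg : ContinuousOn
        (fun η => (∑ i, v i * heavisideProj (ρ i) β η) - ∑ i, v i * ρ i)
        (Set.Icc (0:ℝ) 1) := by
      apply ContinuousOn.sub _ continuousOn_const
      apply continuousOn_finset_sum
      intro i _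
      apply ContinuousOn.mul continuousOn_const
      unfold heavisideProj
      apply ContinuousOn.div
      · exact ((continuous_tanh'.comp (continuous_const.mul continuous_id)).add
          (continuous_tanh'.comp (continuous_const.mul
            (continuous_const.sub continuous_id)))).continuousOn
      · exact ((continuous_tanh'.comp (continuous_const.mul continuous_id)).add
          (continuous_tanh'.comp (continuous_const.mul
            (continuous_const.sub continuous_id)))).continuousOn
      · intro x hx
        rcases hx with ⟨hx0, hx1⟩
        rcases hx0.lt_or_eq with h | h
        · have h1 : 0 < Real.tanh (β * x) := tanh_pos' (by positivity)
          have h2 : 0 ≤ Real.tanh (β * (1 - x)) := tanh_nonneg' (by nlinarith)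
          positivity
        · subst h
          have h1 : 0 < Real.tanh (β * (1 - 0)) := tanh_pos' (by simpa using hβ)
          simp only [mul_zero, Real.tanh_zero, zero_add]
          exact h1.ne'
    exact hg.congr fun x _ => hf x
  refine ⟨hcont, ?_⟩
  -- f 0 > 0
  have h0 : 0 < f 0 := by
    rw [hf, ← Finset.sum_sub_distrib]
    apply Finset.sum_pos'
    · intro i _
      rw [heaviside_zero, sub_nonneg]
      have key : ρ i * Real.tanh β ≤ Real.tanh (ρ i * β) := tanh_mul_ge hβ (hρ i)
      rw [mul_comm (ρ i) β] at key
      have : ρ i ≤ Real.tanh (β * ρ i) / Real.tanh β := (le_div_iff₀ hT).mpr key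
      nlinarith [hv i]
    · obtain ⟨i, hi⟩ := hmid
      refine ⟨i, Finset.mem_univ i, ?_⟩
      rw [heaviside_zero, sub_pos]
      have key : ρ i * Real.tanh β < Real.tanh (ρ i * β) := tanh_mul_gt hβ hi
      rw [mul_comm (ρ i) β] at key
      have : ρ i < Real.tanh (β * ρ i) / Real.tanh β := (lt_div_iff₀ hT).mpr key
      nlinarith [hv i]
  -- f 1 < 0
  have h1 : f 1 < 0 := by
    have hpos : 0 < ∑ i, (v i * ρ i - v i * heavisideProj (ρ i) β 1) := by
      apply Finset.sum_pos'
      · intro i _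
        rw [heaviside_one, sub_nonneg]
        have key : (1 - ρ i) * Real.tanh β ≤ Real.tanh ((1 - ρ i) * β) :=
          tanh_mul_ge hβ ⟨by linarith [(hρ i).2], by linarith [(hρ i).1]⟩
        rw [mul_comm (1 - ρ i) β] at key
        have : (Real.tanh β - Real.tanh (β * (1 - ρ i))) / Real.tanh β ≤ ρ i := by
          rw [div_le_iff₀ hT]; nlinarith
        nlinarith [hv i]
      · obtain ⟨i, hi⟩ := hmid
        refine ⟨i, Finset.mem_univ i, ?_⟩
        rw [heaviside_one, sub_pos]
        have key : (1 - ρ i) * Real.tanh β < Real.tanh ((1 - ρ i) * β) :=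
          tanh_mul_gt hβ ⟨by linarith [hi.2], by linarith [hi.1]⟩
        rw [mul_comm (1 - ρ i) β] at key
        have : (Real.tanh β - Real.tanh (β * (1 - ρ i))) / Real.tanh β < ρ i := by
          rw [div_lt_iff₀ hT]; nlinarith
        nlinarith [hv i]
    rw [hf, ← Finset.sum_sub_distrib]
    have : (∑ i, (v i * heavisideProj (ρ i) β 1 - v i * ρ i))
        = -∑ i, (v i * ρ i - v i * heavisideProj (ρ i) β 1) := by
      rw [← Finset.sum_neg_distrib]
      congr 1; funext i; ring
    rw [this]; linarith
  obtain ⟨η', hη', hfη'⟩ := intermediate_value_Ioo' (zero_le_one) hcont ⟨h1, h0⟩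
  exact ⟨η', hη', hfη'⟩
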